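/- Let d₀ and N be positive integers with d₀²/2 + 3d₀/2 + 1 ≤ N. Then for almost every X ∈ ℝ^{d₀×N} (i.e., outside a Lebesgue-null set), the set of vectors 𝒳 = {1_N} ∪ {X_{(i,:)} : 1 ≤ i ≤ d₀} ∪ {X_{(i,:)} ∘ X_{(j,:)} : 1 ≤ i ≤ j ≤ d₀} ⊆ ℝ^N is linearly independent, where X_{(i,:)} denotes the i-th row of X viewed as a vector in ℝ^N and ∘ is the entrywise product. -/

import Mathlib

open MeasureTheory MvPolynomial

/-- The family consisting of the all-ones vector, the rows of X, and the
entrywise products of pairs of rows of X. -/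
def rowFamily (d₀ N : ℕ) (X : Fin d₀ → Fin N → ℝ) :
    (Unit ⊕ Fin d₀ ⊕ {p : Fin d₀ × Fin d₀ // p.1 ≤ p.2}) → Fin N → ℝ :=
  Sum.elim (fun _ _ => 1)
    (Sum.elim (fun i n => X i n) (fun p n => X p.1.1 n * X p.1.2 n))

lemma nullPolyFin : ∀ (n : ℕ) (p : MvPolynomial (Fin n) ℝ), p ≠ 0 →
    volume {x : Fin n → ℝ | eval x p = 0} = 0 := by
  intro n
  induction n with
  | zero =>
    intro p hp
    obtain ⟨c, rfl⟩ := (MvPolynomial.C_surjective (Fin 0)) p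
    have hc : c ≠ 0 := fun h => hp (by simp [h])
    have : {x : Fin 0 → ℝ | eval x (C c : MvPolynomial (Fin 0) ℝ) = 0} = ∅ := by
      ext x; simp [hc]
    rw [this]; simp
  | succ n ih =>
    intro p hp
    set q : Polynomial (MvPolynomial (Fin n) ℝ) := finSuccEquiv ℝ n p with hq
    have hq0 : q ≠ 0 := by
      simp only [hq]
      exact fun h => hp ((map_eq_zero_iff _ (AlgEquiv.injective _)).mp h)
    have hmeas : MeasurableSet {x : Fin (n+1) → ℝ | eval x p = 0} :=
      (isClosed_eq (MvPolynomial.continuous_eval p) continuous_const).measurableSet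
    -- continuity of (s, y) ↦ eval (Fin.cons y s) p
    have hcons : Continuous (fun w : (Fin n → ℝ) × ℝ => (Fin.cons w.2 w.1 : Fin (n+1) → ℝ)) := by
      refine continuous_pi fun i => ?_
      refine Fin.cases ?_ (fun j => ?_) i
      · simpa using continuous_snd
      · simp; exact (continuous_apply j).comp continuous_fst
    set T : Set ((Fin n → ℝ) × ℝ) :=
      {w | eval (Fin.cons w.2 w.1 : Fin (n+1) → ℝ) p = 0} with hT
    have hTmeas : MeasurableSet T :=
      (isClosed_eq ((MvPolynomial.continuous_eval p).comp hcons) continuous_const).measurableSet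
    -- the measure-preserving equivalence
    have hψ : MeasurePreserving
        ((MeasurableEquiv.piFinSuccAbove (fun _ : Fin (n+1) => ℝ) 0).symm ∘ Prod.swap)
        ((volume : Measure (Fin n → ℝ)).prod (volume : Measure ℝ)) volume :=
      ((MeasureTheory.volume_preserving_piFinSuccAbove (fun _ : Fin (n+1) => ℝ) 0).symm).comp
        Measure.measurePreserving_swap
    have hpre : ((MeasurableEquiv.piFinSuccAbove (fun _ : Fin (n+1) => ℝ) 0).symm ∘ Prod.swap)
        ⁻¹' {x : Fin (n+1) → ℝ | eval x p = 0} = T := by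
      ext w
      simp only [Set.mem_preimage, Set.mem_setOf_eq, Function.comp_apply,
        MeasurableEquiv.piFinSuccAbove_symm_apply, hT, Prod.fst_swap, Prod.snd_swap]
      rw [Fin.insertNthEquiv, Equiv.coe_fn_mk, Fin.insertNth_zero']
      simp
    have key : ((volume : Measure (Fin n → ℝ)).prod (volume : Measure ℝ)) T = 0 := by
      rw [Measure.measure_prod_null hTmeas]
      -- find a nonzero coefficient of q
      have hk : q.coeff q.natDegree ≠ 0 := Polynomial.leadingCoeff_ne_zero.mpr hq0
      have hbad : volume {s : Fin n → ℝ | eval s (q.coeff q.natDegree) = 0} = 0 := ih _ hk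
      have hgood : ∀ᵐ s : Fin n → ℝ, eval s (q.coeff q.natDegree) ≠ 0 := by
        rw [ae_iff]
        simpa using hbad
      filter_upwards [hgood] with s hs
      have hmapne : q.map (eval s) ≠ 0 := by
        intro h
        apply hs
        have := congrArg (fun r => Polynomial.coeff r q.natDegree) h
        simpa [Polynomial.coeff_map] using this
      have : (Prod.mk s ⁻¹' T) ⊆ {y : ℝ | (q.map (eval s)).IsRoot y} := by
        intro y hy
        simp only [hT, Set.mem_preimage, Set.mem_setOf_eq] at hy
        rw [eval_eq_eval_mv_eval'] at hy
        simpa [Polynomial.IsRoot, hq] using hy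
      simp only [Pi.zero_apply]
      exact measure_mono_null this ((Polynomial.finite_setOf_isRoot hmapne).measure_zero _)
    calc volume {x : Fin (n+1) → ℝ | eval x p = 0}
        = ((volume : Measure (Fin n → ℝ)).prod (volume : Measure ℝ))
          (((MeasurableEquiv.piFinSuccAbove (fun _ : Fin (n+1) => ℝ) 0).symm ∘ Prod.swap)
            ⁻¹' {x : Fin (n+1) → ℝ | eval x p = 0}) := (hψ.measure_preimage hmeas.nullMeasurableSet).symm
      _ = 0 := by rw [hpre]; exact key

lemma nullPoly {ι : Type*} [Fintype ι] (p : MvPolynomial ι ℝ) (hp : p ≠ 0) :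
    (volume : Measure (ι → ℝ)) {x | eval x p = 0} = 0 := by
  classical
  set ε := Fintype.equivFin ι with hε
  set p' : MvPolynomial (Fin (Fintype.card ι)) ℝ := rename ε p with hp'
  have hp'0 : p' ≠ 0 := fun h => hp ((rename_injective _ ε.injective) (by simpa [hp'] using h))
  have hnull := nullPolyFin _ p' hp'0
  have hφ : MeasurePreserving (MeasurableEquiv.piCongrLeft (fun _ : Fin (Fintype.card ι) => ℝ) ε)
      volume volume := volume_measurePreserving_piCongrLeft _ ε
  have hmeas : MeasurableSet {x : Fin (Fintype.card ι) → ℝ | eval x p' = 0} :=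
    (isClosed_eq (MvPolynomial.continuous_eval p') continuous_const).measurableSet
  have hsub : {x : ι → ℝ | eval x p = 0} ⊆
      (MeasurableEquiv.piCongrLeft (fun _ : Fin (Fintype.card ι) => ℝ) ε) ⁻¹'
        {x : Fin (Fintype.card ι) → ℝ | eval x p' = 0} := by
    intro x hx
    simp only [Set.mem_preimage, Set.mem_setOf_eq, hp', eval_rename]
    have : (MeasurableEquiv.piCongrLeft (fun _ : Fin (Fintype.card ι) => ℝ) ε) x ∘ ε = x := by
      funext i
      exact Equiv.piCongrLeft_apply_apply (fun _ => ℝ) ε x i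
    rw [this]
    exact hx
  exact measure_mono_null hsub (by rw [hφ.measure_preimage hmeas.nullMeasurableSet]; exact hnull)

lemma uncurryPreserving (d N : ℕ) :
    MeasurePreserving (fun X : Fin d → Fin N → ℝ => fun q : Fin d × Fin N => X q.1 q.2)
      volume volume := by
  constructor
  · exact measurable_pi_lambda _ fun q => (measurable_pi_apply q.2).comp (measurable_pi_apply q.1)
  · have hm : Measurable (fun X : Fin d → Fin N → ℝ => fun q : Fin d × Fin N => X q.1 q.2) :=
      measurable_pi_lambda _ fun q => (measurable_pi_apply q.2).comp (measurable_pi_apply q.1)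
    have key : Measure.map (fun X : Fin d → Fin N → ℝ => fun q : Fin d × Fin N => X q.1 q.2)
        volume = Measure.pi (fun _ : Fin d × Fin N => (volume : Measure ℝ)) := by
      refine (Measure.pi_eq fun s hs => ?_).symm
      rw [Measure.map_apply hm (MeasurableSet.univ_pi hs)]
      have hpre : (fun X : Fin d → Fin N → ℝ => fun q : Fin d × Fin N => X q.1 q.2) ⁻¹'
          (Set.univ.pi s) = Set.univ.pi (fun i => Set.univ.pi (fun j => s (i, j))) := by
        ext X
        simp only [Set.mem_preimage, Set.mem_pi, Set.mem_univ, forall_true_left]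
        exact ⟨fun h i j => h (i, j), fun h q => h q.1 q.2⟩
      rw [hpre]
      rw [MeasureTheory.volume_pi, Measure.pi_pi]
      rw [Fintype.prod_prod_type]
      refine Finset.prod_congr rfl fun i _ => ?_
      rw [MeasureTheory.volume_pi, Measure.pi_pi]
    exact key.trans MeasureTheory.volume_pi.symm

abbrev Idx (d₀ : ℕ) := Unit ⊕ Fin d₀ ⊕ {p : Fin d₀ × Fin d₀ // p.1 ≤ p.2}

lemma card_Idx (d₀ : ℕ) : 2 * Fintype.card (Idx d₀) = d₀ ^ 2 + 3 * d₀ + 2 := by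
  have h1 : Fintype.card {p : Fin d₀ × Fin d₀ // p.1 ≤ p.2} = (d₀ + 1).choose 2 := by
    rw [← Fintype.card_congr (Sym2.sortEquiv (α := Fin d₀))]
    rw [Sym2.card, Fintype.card_fin]
  have h2 : 2 * ((d₀ + 1).choose 2) = d₀ * d₀ + d₀ := by
    rw [Nat.choose_two_right]
    simp only [Nat.add_sub_cancel]
    have : 2 ∣ (d₀ + 1) * d₀ := by
      rcases Nat.even_or_odd d₀ with h | h
      · exact Dvd.dvd.mul_left h.two_dvd _
      · exact Dvd.dvd.mul_right (Even.two_dvd (by simpa using h.add_one)) _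
    rw [Nat.mul_div_cancel' this]
    ring
  have h3 : Fintype.card (Idx d₀) = 1 + (d₀ + (d₀ + 1).choose 2) := by
    simp [Idx, h1]
  have h4 : d₀ ^ 2 = d₀ * d₀ := sq d₀
  omega

open Matrix in
/-- restriction of the family to the chosen columns -/
def resMat (d₀ N : ℕ) (e : Idx d₀ ↪ Fin N) (X : Fin d₀ → Fin N → ℝ) :
    Matrix (Idx d₀) (Idx d₀) ℝ :=
  fun a b => rowFamily d₀ N X a (e b)

def valw (d₀ : ℕ) (i : Fin d₀) : Idx d₀ → ℝ
  | Sum.inl _ => 0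
  | Sum.inr (Sum.inl j) => if i = j then 1 else 0
  | Sum.inr (Sum.inr p) => if i = p.1.1 then 2 else if i = p.1.2 then 3 else 0

noncomputable def Xw (d₀ N : ℕ) (e : Idx d₀ ↪ Fin N) : Fin d₀ → Fin N → ℝ := fun i n =>
  if h : ∃ c, e c = n then valw d₀ i h.choose else 0

lemma Xw_apply (d₀ N : ℕ) (e : Idx d₀ ↪ Fin N) (i : Fin d₀) (c : Idx d₀) :
    Xw d₀ N e i (e c) = valw d₀ i c := by
  have h : ∃ c', e c' = e c := ⟨c, rfl⟩
  rw [Xw, dif_pos h]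
  congr 1
  exact e.injective h.choose_spec

lemma resMat_Xw (d₀ N : ℕ) (e : Idx d₀ ↪ Fin N) (a b : Idx d₀) :
    resMat d₀ N e (Xw d₀ N e) a b =
      Sum.elim (fun _ => (1:ℝ))
        (Sum.elim (fun i => valw d₀ i b) (fun p => valw d₀ p.1.1 b * valw d₀ p.1.2 b)) a := by
  rcases a with _ | i | p <;> simp [resMat, rowFamily, Xw_apply]

lemma rows_indep (d₀ N : ℕ) (e : Idx d₀ ↪ Fin N) :
    LinearIndependent ℝ (fun a => resMat d₀ N e (Xw d₀ N e) a) := by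
  classical
  rw [Fintype.linearIndependent_iff]
  intro g hg
  have hS : ∀ b : Idx d₀,
      g (Sum.inl ()) * 1 +
      ((∑ i : Fin d₀, g (Sum.inr (Sum.inl i)) * valw d₀ i b) +
       ∑ p : {p : Fin d₀ × Fin d₀ // p.1 ≤ p.2},
         g (Sum.inr (Sum.inr p)) * (valw d₀ p.1.1 b * valw d₀ p.1.2 b)) = 0 := by
    intro b
    have h := congrFun hg b
    simp only [Finset.sum_apply, Pi.smul_apply, smul_eq_mul, Pi.zero_apply, resMat_Xw] at h
    rw [Fintype.sum_sum_type] at h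
    simp only [Fintype.sum_sum_type] at h
    simpa using h
  -- g0 = 0
  have hg0 : g (Sum.inl ()) = 0 := by
    have h := hS (Sum.inl ())
    simpa [valw] using h
  -- equations from the row columns
  have hER : ∀ j : Fin d₀,
      g (Sum.inr (Sum.inl j)) + g (Sum.inr (Sum.inr ⟨(j, j), le_rfl⟩)) = 0 := by
    intro j
    have h := hS (Sum.inr (Sum.inl j))
    have h1 : (∑ i : Fin d₀, g (Sum.inr (Sum.inl i)) * valw d₀ i (Sum.inr (Sum.inl j)))
        = g (Sum.inr (Sum.inl j)) := by
      simp only [valw, mul_ite, mul_one, mul_zero]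
      simp [Finset.sum_ite_eq, Finset.sum_ite_eq']
    have h2 : (∑ p : {p : Fin d₀ × Fin d₀ // p.1 ≤ p.2},
          g (Sum.inr (Sum.inr p)) *
            (valw d₀ p.1.1 (Sum.inr (Sum.inl j)) * valw d₀ p.1.2 (Sum.inr (Sum.inl j))))
        = g (Sum.inr (Sum.inr ⟨(j, j), le_rfl⟩)) := by
      rw [Fintype.sum_eq_single (⟨(j, j), le_rfl⟩ : {p : Fin d₀ × Fin d₀ // p.1 ≤ p.2})]
      · simp [valw]
      · rintro ⟨⟨u, v⟩, huv⟩ hne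
        by_cases h1 : u = j
        · by_cases h2 : v = j
          · exfalso; apply hne; subst h1; subst h2; rfl
          · simp [valw, h2]
        · simp [valw, h1]
    rw [h1, h2] at h
    rw [hg0] at h
    linarith
  -- equations from the diagonal pair columns
  have hED : ∀ j : Fin d₀,
      2 * g (Sum.inr (Sum.inl j)) + 4 * g (Sum.inr (Sum.inr ⟨(j, j), le_rfl⟩)) = 0 := by
    intro j
    have h := hS (Sum.inr (Sum.inr ⟨(j, j), le_rfl⟩))
    have hval : ∀ i : Fin d₀,
        valw d₀ i (Sum.inr (Sum.inr ⟨(j, j), le_rfl⟩)) = if i = j then 2 else 0 := by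
      intro i
      by_cases hij : i = j <;> simp [valw, hij]
    have h1 : (∑ i : Fin d₀, g (Sum.inr (Sum.inl i)) *
          valw d₀ i (Sum.inr (Sum.inr ⟨(j, j), le_rfl⟩)))
        = 2 * g (Sum.inr (Sum.inl j)) := by
      simp only [hval, mul_ite, mul_zero]
      simp [Finset.sum_ite_eq, Finset.sum_ite_eq']
      ring
    have h2 : (∑ p : {p : Fin d₀ × Fin d₀ // p.1 ≤ p.2},
          g (Sum.inr (Sum.inr p)) *
            (valw d₀ p.1.1 (Sum.inr (Sum.inr ⟨(j, j), le_rfl⟩)) *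
             valw d₀ p.1.2 (Sum.inr (Sum.inr ⟨(j, j), le_rfl⟩))))
        = 4 * g (Sum.inr (Sum.inr ⟨(j, j), le_rfl⟩)) := by
      rw [Fintype.sum_eq_single (⟨(j, j), le_rfl⟩ : {p : Fin d₀ × Fin d₀ // p.1 ≤ p.2})]
      · simp [hval]; ring
      · rintro ⟨⟨u, v⟩, huv⟩ hne
        by_cases h1 : u = j
        · by_cases h2 : v = j
          · exfalso; apply hne; subst h1; subst h2; rfl
          · simp [hval, h2]
        · simp [hval, h1]
    rw [h1, h2, hg0] at h
    linarith
  have hgr : ∀ j : Fin d₀, g (Sum.inr (Sum.inl j)) = 0 := by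
    intro j; have := hER j; have := hED j; linarith
  have hgd : ∀ j : Fin d₀, g (Sum.inr (Sum.inr ⟨(j, j), le_rfl⟩)) = 0 := by
    intro j; have := hER j; have := hED j; linarith
  have hgdiag : ∀ p : {p : Fin d₀ × Fin d₀ // p.1 ≤ p.2}, p.1.1 = p.1.2 →
      g (Sum.inr (Sum.inr p)) = 0 := by
    rintro ⟨⟨u, v⟩, huv⟩ h
    simp only at h
    subst h
    exact hgd u
  -- final goal
  rintro (⟨⟩ | i | ⟨⟨j, k⟩, hjk⟩)
  · exact hg0
  · exact hgr i
  · by_cases hjk' : j = k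
    · subst hjk'
      exact hgdiag ⟨(j, j), hjk⟩ rfl
    · -- off-diagonal column
      have h := hS (Sum.inr (Sum.inr ⟨(j, k), hjk⟩))
      have hval : ∀ i : Fin d₀,
          valw d₀ i (Sum.inr (Sum.inr ⟨(j, k), hjk⟩))
            = if i = j then 2 else if i = k then 3 else 0 := by
        intro i; rfl
      have h1 : (∑ i : Fin d₀, g (Sum.inr (Sum.inl i)) *
            valw d₀ i (Sum.inr (Sum.inr ⟨(j, k), hjk⟩))) = 0 :=
        Finset.sum_eq_zero fun i _ => by rw [hgr i, zero_mul]
      have h2 : (∑ p : {p : Fin d₀ × Fin d₀ // p.1 ≤ p.2},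
            g (Sum.inr (Sum.inr p)) *
              (valw d₀ p.1.1 (Sum.inr (Sum.inr ⟨(j, k), hjk⟩)) *
               valw d₀ p.1.2 (Sum.inr (Sum.inr ⟨(j, k), hjk⟩))))
          = 6 * g (Sum.inr (Sum.inr ⟨(j, k), hjk⟩)) := by
        rw [Fintype.sum_eq_single (⟨(j, k), hjk⟩ : {p : Fin d₀ × Fin d₀ // p.1 ≤ p.2})]
        · have hkj : k ≠ j := fun hh => hjk' hh.symm
          simp [hval, hkj]; ring
        · rintro ⟨⟨u, v⟩, huv⟩ hne
          by_cases hu1 : u = j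
          · by_cases hv1 : v = j
            · rw [hgdiag ⟨(u, v), huv⟩ (hu1.trans hv1.symm), zero_mul]
            · by_cases hv2 : v = k
              · exfalso; apply hne; subst hu1; subst hv2; rfl
              · simp [hval, hv1, hv2]
          · by_cases hu2 : u = k
            · by_cases hv1 : v = j
              · exfalso
                exact hjk' (le_antisymm hjk (hv1 ▸ hu2 ▸ huv))
              · by_cases hv2 : v = k
                · rw [hgdiag ⟨(u, v), huv⟩ (hu2.trans hv2.symm), zero_mul]
                · simp [hval, hu1, hv1, hv2]
            · simp [hval, hu1, hu2]
      rw [h1, h2, hg0] at h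
      linarith

lemma det_resMat_Xw_ne (d₀ N : ℕ) (e : Idx d₀ ↪ Fin N) :
    (resMat d₀ N e (Xw d₀ N e)).det ≠ 0 := by
  classical
  have h := (Matrix.linearIndependent_rows_iff_isUnit (K := ℝ)).mp (rows_indep d₀ N e)
  have := (Matrix.isUnit_iff_isUnit_det _).mp h
  exact this.ne_zero

noncomputable def polyMat (d₀ N : ℕ) (e : Idx d₀ ↪ Fin N) :
    Matrix (Idx d₀) (Idx d₀) (MvPolynomial (Fin d₀ × Fin N) ℝ) := fun a b =>
  Sum.elim (fun _ => 1)
    (Sum.elim (fun i => MvPolynomial.X (i, e b))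
      (fun p => MvPolynomial.X (p.1.1, e b) * MvPolynomial.X (p.1.2, e b))) a

open MvPolynomial in
lemma eval_polyMat (d₀ N : ℕ) (e : Idx d₀ ↪ Fin N) (X : Fin d₀ → Fin N → ℝ) :
    MvPolynomial.eval (fun q : Fin d₀ × Fin N => X q.1 q.2) (polyMat d₀ N e).det
      = (resMat d₀ N e X).det := by
  rw [RingHom.map_det]
  congr 1
  ext a b
  rcases a with _ | i | p <;>
    simp [polyMat, resMat, rowFamily, Matrix.map_apply]

/-- If d₀²/2 + 3d₀/2 + 1 ≤ N, then for almost every X ∈ ℝ^{d₀×N} the vectors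
1, the rows of X, and the Hadamard products of pairs of rows of X are linearly
independent. -/
theorem generic_input_independent (d₀ N : ℕ)
    (hN : d₀ ^ 2 + 3 * d₀ + 2 ≤ 2 * N) :
    volume {X : Fin d₀ → Fin N → ℝ |
      ¬ LinearIndependent ℝ (rowFamily d₀ N X)} = 0 := by
  classical
  have hcard : Fintype.card (Idx d₀) ≤ N := by
    have := card_Idx d₀; omega
  obtain ⟨e⟩ : Nonempty (Idx d₀ ↪ Fin N) :=
    Function.Embedding.nonempty_of_card_le (by rwa [Fintype.card_fin])
  set D := (polyMat d₀ N e).det with hD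
  have hD0 : D ≠ 0 := by
    intro h
    apply det_resMat_Xw_ne d₀ N e
    rw [← eval_polyMat d₀ N e (Xw d₀ N e), ← hD, h, map_zero]
  have hmeasA : MeasurableSet {y : Fin d₀ × Fin N → ℝ | MvPolynomial.eval y D = 0} :=
    (isClosed_eq (MvPolynomial.continuous_eval D) continuous_const).measurableSet
  have hsub : {X : Fin d₀ → Fin N → ℝ | ¬ LinearIndependent ℝ (rowFamily d₀ N X)} ⊆
      (fun X : Fin d₀ → Fin N → ℝ => fun q : Fin d₀ × Fin N => X q.1 q.2) ⁻¹'
        {y | MvPolynomial.eval y D = 0} := by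
    intro X hX
    simp only [Set.mem_setOf_eq] at hX
    simp only [Set.mem_preimage, Set.mem_setOf_eq, hD, eval_polyMat]
    by_contra hdet
    apply hX
    have hU : IsUnit (resMat d₀ N e X) :=
      (Matrix.isUnit_iff_isUnit_det _).mpr (isUnit_iff_ne_zero.mpr hdet)
    have hLI : LinearIndependent ℝ (fun a => resMat d₀ N e X a) :=
      Matrix.linearIndependent_rows_iff_isUnit.mpr hU
    refine LinearIndependent.of_comp (LinearMap.funLeft ℝ ℝ e) ?_
    have : (⇑(LinearMap.funLeft ℝ ℝ ⇑e)) ∘ rowFamily d₀ N X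
        = fun a => resMat d₀ N e X a := rfl
    rw [this]
    exact hLI
  refine measure_mono_null hsub ?_
  rw [(uncurryPreserving d₀ N).measure_preimage hmeasA.nullMeasurableSet]
  exact nullPoly D hD0
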